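/- Let S be a finite set, R a collection of subsets of S, and X ∈ R a maximal element of R (with respect to inclusion). Then φ(S, R) = φ(S, R \ {X}) − |S \ X|! · φ(X, {Y ∈ R : Y ⊊ X}). -/

import Mathlib

/-- `phi S R` is the number of permutations (nodup lists enumerating `S`) of the
finite set `S` that do not have any set `X ∈ R` as a prefix, where a set `X` is a
prefix of a list if the first `|X|` elements of the list are exactly the elements of `X`. -/
noncomputable def phi {α : Type*} [DecidableEq α] (S : Finset α) (R : Set (Finset α)) : ℕ :=
  Nat.card {l : List α // l.Nodup ∧ l.toFinset = S ∧ ∀ X ∈ R, (l.take X.card).toFinset ≠ X}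

section Aux
variable {α : Type*} [DecidableEq α]

lemma perm_char {S : Finset α} {l : List α} :
    (l.Nodup ∧ l.toFinset = S) ↔ l.Perm S.toList := by
  constructor
  · rintro ⟨h1, h2⟩
    have h3 : l.toFinset = S.toList.toFinset := by rw [h2, Finset.toList_toFinset]
    rw [List.toFinset_eq_iff_perm_dedup] at h3
    rwa [h1.dedup, (S.nodup_toList).dedup] at h3
  · intro h
    refine ⟨h.symm.nodup S.nodup_toList, ?_⟩
    have h3 : l.toFinset = S.toList.toFinset := List.toFinset_eq_iff_perm_dedup.mpr h.dedup
    rwa [Finset.toList_toFinset] at h3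

lemma finite_perms (S : Finset α) (P : List α → Prop) :
    {l : List α | l.Nodup ∧ l.toFinset = S ∧ P l}.Finite := by
  apply Set.Finite.subset (S.toList.permutations.toFinset.finite_toSet)
  rintro l ⟨h1, h2, _⟩
  simp only [List.coe_toFinset, Set.mem_setOf_eq, List.mem_permutations]
  exact perm_char.mp ⟨h1, h2⟩

lemma card_perms (T : Finset α) :
    Nat.card {l : List α // l.Nodup ∧ l.toFinset = T} = T.card.factorial := by
  have hset : {l : List α | l.Nodup ∧ l.toFinset = T} = ↑T.toList.permutations.toFinset := by
    ext l
    simp only [Set.mem_setOf_eq, List.coe_toFinset, List.mem_permutations]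
    exact perm_char
  calc Nat.card {l : List α // l.Nodup ∧ l.toFinset = T}
      = Set.ncard {l : List α | l.Nodup ∧ l.toFinset = T} := Nat.card_coe_set_eq _
    _ = T.card.factorial := by
        rw [hset, Set.ncard_coe_finset,
          List.toFinset_card_of_nodup (List.nodup_permutations _ T.nodup_toList),
          List.length_permutations, Finset.length_toList]

end Aux

section Split
variable {α : Type*} [DecidableEq α]

lemma split_drop {S X : Finset α} {l : List α}
    (hnd : l.Nodup) (hS : l.toFinset = S) (hpre : (l.take X.card).toFinset = X) :
    (l.drop X.card).toFinset = S \ X := by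
  have hdisj : Disjoint (l.take X.card).toFinset (l.drop X.card).toFinset := by
    rw [List.disjoint_toFinset_iff_disjoint]
    have : (l.take X.card ++ l.drop X.card).Nodup := by
      rwa [List.take_append_drop]
    exact (List.nodup_append'.mp this).2.2
  have hu : (l.take X.card).toFinset ∪ (l.drop X.card).toFinset = S := by
    rw [← List.toFinset_append, List.take_append_drop, hS]
  rw [hpre] at hu hdisj
  rw [← hu, Finset.union_sdiff_cancel_left hdisj]

lemma join_facts {S X : Finset α} (hXS : X ⊆ S) {a b : List α}
    (ha : a.Nodup) (haX : a.toFinset = X) (hb : b.Nodup) (hbX : b.toFinset = S \ X) :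
    (a ++ b).Nodup ∧ (a ++ b).toFinset = S ∧ a.length = X.card ∧
      (a ++ b).take X.card = a := by
  have hlen : a.length = X.card := by rw [← haX, List.toFinset_card_of_nodup ha]
  have hdisj : a.Disjoint b := by
    rw [← List.disjoint_toFinset_iff_disjoint, haX, hbX]
    exact Finset.disjoint_sdiff
  refine ⟨List.nodup_append'.mpr ⟨ha, hb, hdisj⟩, ?_, hlen, ?_⟩
  · rw [List.toFinset_append, haX, hbX, Finset.union_sdiff_of_subset hXS]
  · rw [← hlen, List.take_left]

end Split

section Equiv
variable {α : Type*} [DecidableEq α]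

noncomputable def splitEquiv (S : Finset α) (R : Finset (Finset α)) (X : Finset α)
    (hXS : X ⊆ S) (hmax : ∀ Y ∈ R, ¬ X ⊂ Y) :
    {l : List α // l.Nodup ∧ l.toFinset = S ∧ (l.take X.card).toFinset = X ∧
        ∀ Y ∈ R.erase X, (l.take Y.card).toFinset ≠ Y} ≃
    ({l : List α // l.Nodup ∧ l.toFinset = X ∧
        ∀ Y ∈ ({Y : Finset α | Y ∈ R ∧ Y ⊂ X} : Set (Finset α)),
          (l.take Y.card).toFinset ≠ Y} ×
     {l : List α // l.Nodup ∧ l.toFinset = S \ X}) where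
  toFun l :=
    (⟨l.1.take X.card, List.Nodup.sublist (List.take_sublist _ _) l.2.1, l.2.2.2.1, by
        rintro Y ⟨hYR, hYX⟩ heq
        have hle : Y.card ≤ X.card := (Finset.card_lt_card hYX).le
        rw [List.take_take, min_eq_left hle] at heq
        exact l.2.2.2.2 Y (Finset.mem_erase.mpr ⟨hYX.ne, hYR⟩) heq⟩,
     ⟨l.1.drop X.card, List.Nodup.sublist (List.drop_sublist _ _) l.2.1,
        split_drop l.2.1 l.2.2.1 l.2.2.2.1⟩)
  invFun p := ⟨p.1.1 ++ p.2.1, by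
    obtain ⟨ha, haX, hav⟩ := p.1.2
    obtain ⟨hb, hbX⟩ := p.2.2
    obtain ⟨hnd, hS, hlen, htake⟩ := join_facts hXS ha haX hb hbX
    refine ⟨hnd, hS, by rw [htake, haX], ?_⟩
    intro Y hY heq
    obtain ⟨hYne, hYR⟩ := Finset.mem_erase.mp hY
    rcases le_or_gt Y.card X.card with h | h
    · have ht : (p.1.1 ++ p.2.1).take Y.card = p.1.1.take Y.card :=
        List.take_append_of_le_length (by rw [hlen]; exact h)
      rw [ht] at heq
      have hsub : Y ⊆ X := by
        rw [← haX, ← heq]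
        intro x hx
        rw [List.mem_toFinset] at hx ⊢
        exact (List.take_sublist _ _).subset hx
      exact hav Y ⟨hYR, lt_of_le_of_ne hsub hYne⟩ heq
    · have ht : ((p.1.1 ++ p.2.1).take Y.card).take X.card = (p.1.1 ++ p.2.1).take X.card := by
        rw [List.take_take, min_eq_left h.le]
      have hsub : X ⊆ Y := by
        intro x hx
        rw [← heq, List.mem_toFinset]
        have hxa : x ∈ p.1.1 := by rw [← List.mem_toFinset, haX]; exact hx
        rw [← htake, ← ht] at hxa
        exact (List.take_sublist _ _).subset hxa
      exact hmax Y hYR (lt_of_le_of_ne hsub (Ne.symm hYne))⟩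
  left_inv l := Subtype.ext (List.take_append_drop _ _)
  right_inv p := by
    obtain ⟨ha, haX, hav⟩ := p.1.2
    obtain ⟨hb, hbX⟩ := p.2.2
    obtain ⟨hnd, hS, hlen, htake⟩ := join_facts hXS ha haX hb hbX
    refine Prod.ext (Subtype.ext ?_) (Subtype.ext ?_)
    · exact htake
    · show (p.1.1 ++ p.2.1).drop X.card = p.2.1
      rw [← hlen, List.drop_left]

end Equiv

theorem stmt4 {α : Type*} [DecidableEq α] (S : Finset α) (R : Finset (Finset α))
    (hR : ∀ Y ∈ R, Y ⊂ S) (X : Finset α) (hX : X ∈ R)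
    (hmax : ∀ Y ∈ R, ¬ X ⊂ Y) :
    phi S ↑R = phi S ↑(R.erase X) -
      Nat.factorial (S \ X).card * phi X {Y | Y ∈ R ∧ Y ⊂ X} := by
  classical
  set A : Set (List α) := {l | l.Nodup ∧ l.toFinset = S ∧
    ∀ Y ∈ (↑R : Set (Finset α)), (l.take Y.card).toFinset ≠ Y} with hA
  set A' : Set (List α) := {l | l.Nodup ∧ l.toFinset = S ∧
    ∀ Y ∈ (↑(R.erase X) : Set (Finset α)), (l.take Y.card).toFinset ≠ Y} with hA'
  set C : Set (List α) := {l | l.Nodup ∧ l.toFinset = S ∧ ((l.take X.card).toFinset = X ∧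
    ∀ Y ∈ R.erase X, (l.take Y.card).toFinset ≠ Y)} with hC
  have hAfin : A.Finite := finite_perms S _
  have hCfin : C.Finite := finite_perms S _
  have hunion : A' = A ∪ C := by
    ext l
    simp only [hA, hA', hC, Set.mem_setOf_eq, Set.mem_union, Finset.mem_coe]
    constructor
    · rintro ⟨h1, h2, h3⟩
      by_cases hpre : (l.take X.card).toFinset = X
      · exact Or.inr ⟨h1, h2, hpre, fun Y hY => h3 Y hY⟩
      · refine Or.inl ⟨h1, h2, fun Y hY => ?_⟩
        by_cases hYX : Y = X
        · subst hYX; exact hpre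
        · exact h3 Y (Finset.mem_erase.mpr ⟨hYX, hY⟩)
    · rintro (⟨h1, h2, h3⟩ | ⟨h1, h2, h3, h4⟩)
      · exact ⟨h1, h2, fun Y hY => h3 Y (Finset.mem_of_mem_erase hY)⟩
      · exact ⟨h1, h2, fun Y hY => h4 Y hY⟩
  have hdisj : Disjoint A C := by
    rw [Set.disjoint_left]
    rintro l ⟨_, _, h3⟩ ⟨_, _, h4, _⟩
    exact h3 X hX h4
  have hcount : A'.ncard = A.ncard + C.ncard := by
    rw [hunion, Set.ncard_union_eq hdisj hAfin hCfin]
  have hphiR : phi S ↑R = A.ncard := Nat.card_coe_set_eq A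
  have hphiR' : phi S ↑(R.erase X) = A'.ncard := Nat.card_coe_set_eq A'
  have hXS : X ⊆ S := (hR X hX).subset
  have hCcard : C.ncard = Nat.factorial (S \ X).card * phi X {Y | Y ∈ R ∧ Y ⊂ X} := by
    have h1 : C.ncard = Nat.card
        {l : List α // l.Nodup ∧ l.toFinset = S ∧ (l.take X.card).toFinset = X ∧
          ∀ Y ∈ R.erase X, (l.take Y.card).toFinset ≠ Y} :=
      (Nat.card_coe_set_eq C).symm
    rw [h1, Nat.card_congr (splitEquiv S R X hXS hmax), Nat.card_prod, card_perms,
      mul_comm]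
    rfl
  omega
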